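/- arXiv:1203.0463 — 4 statements merged into one kernel-verified Lean document; each statement's English description precedes it below -/
import Mathlib

section
/- Let K(ξ) = exp(ξ²/(4ν)) for ν > 0. There exists a constant C > 0 such that for all u ∈ H¹(K), ∫_ℝ |u(ξ)|² ξ² K(ξ) dξ ≤ C ∫_ℝ |u'(ξ)|² K(ξ) dξ. -/
open MeasureTheory Real

/-- A positive function bounded below by `ε/ξ` on `Ioi m` is not integrable there. -/
lemma tail_aux {w : ℝ → ℝ} {m ε : ℝ} (hm : 0 < m) (hε : 0 < ε)
    (hw : IntegrableOn w (Set.Ioi m)) (_hmeas : AEStronglyMeasurable w volume)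
    (hbd : ∀ ξ, m < ξ → ε * ξ⁻¹ ≤ w ξ) : False := by
  have hint : IntegrableOn (fun ξ => ε * ξ⁻¹) (Set.Ioi m) := by
    refine Integrable.mono' hw
      ((measurable_const.mul measurable_inv).aestronglyMeasurable.restrict) ?_
    refine (ae_restrict_iff' measurableSet_Ioi).2 (Filter.Eventually.of_forall fun ξ hξ => ?_)
    have hξ0 : 0 < ξ := hm.trans hξ
    have h0 : (0:ℝ) ≤ ε * ξ⁻¹ := by positivity
    rw [Real.norm_of_nonneg h0]
    exact hbd ξ hξ
  have hint2 : IntegrableOn (fun ξ : ℝ => ξ ^ (-1 : ℝ)) (Set.Ioi m) := by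
    have h := hint.const_mul ε⁻¹
    refine IntegrableOn.congr_fun h (fun ξ hξ => ?_) measurableSet_Ioi
    have hξ0 : 0 < ξ := hm.trans hξ
    rw [Real.rpow_neg_one]
    field_simp
  rw [integrableOn_Ioi_rpow_iff hm] at hint2
  linarith

/-- There is `C > 0` with `∫ u² ξ² K ≤ C ∫ (u')² K` for all `u ∈ H¹(K)`,
where `K ξ = exp (ξ²/(4ν))`. -/
theorem stmt1 (ν : ℝ) (hν : 0 < ν)
    (K : ℝ → ℝ) (hK : ∀ ξ, K ξ = Real.exp (ξ ^ 2 / (4 * ν))) :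
    ∃ C > (0 : ℝ), ∀ u : ℝ → ℝ, Differentiable ℝ u →
      Integrable (fun ξ => u ξ ^ 2 * K ξ) →
      Integrable (fun ξ => (deriv u ξ) ^ 2 * K ξ) →
      ∫ ξ, u ξ ^ 2 * ξ ^ 2 * K ξ ≤ C * ∫ ξ, (deriv u ξ) ^ 2 * K ξ := by
  set c : ℝ := (4 * ν)⁻¹ with hc_def
  have hc : 0 < c := by positivity
  have hKpos : ∀ ξ, 0 < K ξ := fun ξ => (hK ξ) ▸ Real.exp_pos _
  have hK1 : ∀ ξ, 1 ≤ K ξ := fun ξ => (hK ξ) ▸ Real.one_le_exp (by positivity)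
  have hKcont : Continuous K := by
    have : K = fun ξ => Real.exp (ξ ^ 2 / (4 * ν)) := funext hK
    rw [this]; continuity
  have hKd : ∀ ξ, HasDerivAt K (2 * c * ξ * K ξ) ξ := by
    intro ξ
    have h1 : HasDerivAt (fun x : ℝ => x ^ 2 / (4 * ν)) (2 * c * ξ) ξ := by
      have := ((hasDerivAt_pow 2 ξ)).div_const (4 * ν)
      refine this.congr_deriv ?_
      all_goals (rw [hc_def]; field_simp; try ring)
    have h2 := h1.exp
    have hKe : K = fun x => Real.exp (x ^ 2 / (4 * ν)) := funext hK
    rw [hKe]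
    convert h2 using 1
    show 2 * c * ξ * rexp (ξ ^ 2 / (4 * ν)) = rexp (ξ ^ 2 / (4 * ν)) * (2 * c * ξ)
    ring
  refine ⟨16 * ν ^ 2, by positivity, ?_⟩
  intro u hu h1 h2
  have hucont : Continuous u := hu.continuous
  set I' : ℝ := ∫ ξ, (deriv u ξ) ^ 2 * K ξ with hI'
  -- the quantity in the integrand
  have hcont0 : Continuous (fun ξ : ℝ => c ^ 2 * ξ ^ 2 * (u ξ) ^ 2 * K ξ) := by
    exact ((continuous_const.mul (continuous_pow 2)).mul (hucont.pow 2)).mul hKcont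
  -- boundary lemmas
  have bdryR : ∀ M : ℝ, ∀ ε : ℝ, 0 < ε → ∃ a, max M 1 ≤ a ∧ c * a * (u a) ^ 2 * K a ≤ ε := by
    intro M ε hε
    by_contra hcon
    push_neg at hcon
    refine tail_aux (w := fun ξ => u ξ ^ 2 * K ξ) (m := max M 1) (ε := ε / c)
      (lt_of_lt_of_le one_pos (le_max_right _ _)) (by positivity)
      h1.integrableOn h1.aestronglyMeasurable (fun ξ hξ => ?_)
    have hξ0 : 0 < ξ := lt_of_le_of_lt (le_trans zero_le_one (le_max_right M 1)) hξ
    have hb := hcon ξ hξ.le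
    show ε / c * ξ⁻¹ ≤ u ξ ^ 2 * K ξ
    rw [show ε / c * ξ⁻¹ = ε / (c * ξ) by field_simp, div_le_iff₀ (by positivity)]
    nlinarith
  have bdryL : ∀ M : ℝ, ∀ ε : ℝ, 0 < ε →
      ∃ b, b ≤ -(max M 1) ∧ -ε ≤ c * b * (u b) ^ 2 * K b := by
    intro M ε hε
    by_contra hcon
    push_neg at hcon
    refine tail_aux (w := fun ξ => u (-ξ) ^ 2 * K (-ξ)) (m := max M 1) (ε := ε / c)
      (lt_of_lt_of_le one_pos (le_max_right _ _)) (by positivity)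
      h1.comp_neg.integrableOn h1.comp_neg.aestronglyMeasurable (fun ξ hξ => ?_)
    have hξ0 : 0 < ξ := lt_of_le_of_lt (le_trans zero_le_one (le_max_right M 1)) hξ
    have hb := hcon (-ξ) (by simpa using neg_le_neg hξ.le)
    show ε / c * ξ⁻¹ ≤ u (-ξ) ^ 2 * K (-ξ)
    rw [show ε / c * ξ⁻¹ = ε / (c * ξ) by field_simp, div_le_iff₀ (by positivity)]
    nlinarith
  -- derivative of the boundary function
  have hFd : ∀ ξ : ℝ, HasDerivAt (fun x => c * x * (u x) ^ 2 * K x)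
      (c * (u ξ) ^ 2 * K ξ + 2 * c * ξ * u ξ * (deriv u ξ) * K ξ
        + 2 * c ^ 2 * ξ ^ 2 * (u ξ) ^ 2 * K ξ) ξ := by
    intro ξ
    have hx : HasDerivAt (fun x : ℝ => c * x) c ξ := by
      simpa using (hasDerivAt_id ξ).const_mul c
    have hu2 : HasDerivAt (fun x => (u x) ^ 2) (2 * (u ξ) * (deriv u ξ)) ξ := by
      have := ((hu ξ).hasDerivAt).fun_pow 2
      simpa [mul_comm, mul_assoc] using this
    have h := (hx.fun_mul hu2).fun_mul (hKd ξ)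
    refine h.congr_deriv ?_
    ring
  -- interval integrability facts
  have hu'II : ∀ a b : ℝ, IntervalIntegrable (deriv u) volume a b := by
    intro a b
    rw [intervalIntegrable_iff]
    have hg : IntegrableOn (fun ξ => (1:ℝ) + (deriv u ξ) ^ 2 * K ξ) (Set.uIoc a b) := by
      exact (integrableOn_const measure_Ioc_lt_top.ne).add h2.integrableOn
    refine Integrable.mono' hg
      ((measurable_deriv u).aestronglyMeasurable.restrict) (Filter.Eventually.of_forall fun x => ?_)
    rw [Real.norm_eq_abs]
    nlinarith [sq_abs (deriv u x), sq_nonneg (|deriv u x| - 1), hK1 x, sq_nonneg (deriv u x),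
      abs_nonneg (deriv u x)]
  have hF'II : ∀ a b : ℝ, IntervalIntegrable
      (fun ξ => c * (u ξ) ^ 2 * K ξ + 2 * c * ξ * u ξ * (deriv u ξ) * K ξ
        + 2 * c ^ 2 * ξ ^ 2 * (u ξ) ^ 2 * K ξ) volume a b := by
    intro a b
    have p1 : IntervalIntegrable (fun ξ => c * (u ξ ^ 2 * K ξ)) volume a b :=
      (h1.intervalIntegrable).const_mul c
    have p2 : IntervalIntegrable (fun ξ => (2 * c * ξ * u ξ * K ξ) * deriv u ξ) volume a b :=
      (hu'II a b).continuousOn_mul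
        (((((continuous_const.mul continuous_id).mul hucont).mul hKcont)).continuousOn)
    have p3 : IntervalIntegrable (fun ξ => (2 * c ^ 2 * ξ ^ 2) * (u ξ ^ 2 * K ξ)) volume a b :=
      (h1.intervalIntegrable).continuousOn_mul
        ((continuous_const.mul (continuous_pow 2)).continuousOn)
    have h := (p1.add p2).add p3
    have heq : (fun ξ => c * (u ξ ^ 2 * K ξ) + (2 * c * ξ * u ξ * K ξ) * deriv u ξ
        + (2 * c ^ 2 * ξ ^ 2) * (u ξ ^ 2 * K ξ))
        = fun ξ => c * (u ξ) ^ 2 * K ξ + 2 * c * ξ * u ξ * (deriv u ξ) * K ξ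
        + 2 * c ^ 2 * ξ ^ 2 * (u ξ) ^ 2 * K ξ := by
      funext ξ; ring
    rwa [heq] at h
  -- the key pointwise inequality
  have keyineq : ∀ ξ : ℝ, c ^ 2 * ξ ^ 2 * (u ξ) ^ 2 * K ξ ≤ (deriv u ξ) ^ 2 * K ξ
      + (c * (u ξ) ^ 2 * K ξ + 2 * c * ξ * u ξ * (deriv u ξ) * K ξ
        + 2 * c ^ 2 * ξ ^ 2 * (u ξ) ^ 2 * K ξ) := by
    intro ξ
    nlinarith [mul_nonneg (sq_nonneg (deriv u ξ + c * ξ * u ξ)) (hKpos ξ).le,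
      mul_nonneg (mul_nonneg hc.le (sq_nonneg (u ξ))) (hKpos ξ).le]
  -- main estimate on intervals
  have main : ∀ a b : ℝ, b ≤ 0 → 0 ≤ a →
      (∫ ξ in b..a, c ^ 2 * ξ ^ 2 * (u ξ) ^ 2 * K ξ)
        ≤ I' + c * a * (u a) ^ 2 * K a - c * b * (u b) ^ 2 * K b := by
    intro a b hb ha
    have hba : b ≤ a := hb.trans ha
    have hFTC : (∫ ξ in b..a, (c * (u ξ) ^ 2 * K ξ + 2 * c * ξ * u ξ * (deriv u ξ) * K ξ
          + 2 * c ^ 2 * ξ ^ 2 * (u ξ) ^ 2 * K ξ))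
        = c * a * (u a) ^ 2 * K a - c * b * (u b) ^ 2 * K b :=
      intervalIntegral.integral_eq_sub_of_hasDerivAt (fun x _ => hFd x) (hF'II b a)
    have hmono : (∫ ξ in b..a, c ^ 2 * ξ ^ 2 * (u ξ) ^ 2 * K ξ)
        ≤ ∫ ξ in b..a, ((deriv u ξ) ^ 2 * K ξ
          + (c * (u ξ) ^ 2 * K ξ + 2 * c * ξ * u ξ * (deriv u ξ) * K ξ
            + 2 * c ^ 2 * ξ ^ 2 * (u ξ) ^ 2 * K ξ)) :=
      intervalIntegral.integral_mono_on hba (hcont0.intervalIntegrable b a)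
        ((h2.intervalIntegrable).add (hF'II b a)) (fun x _ => keyineq x)
    rw [intervalIntegral.integral_add (h2.intervalIntegrable) (hF'II b a), hFTC] at hmono
    have hle : (∫ ξ in b..a, (deriv u ξ) ^ 2 * K ξ) ≤ I' := by
      rw [intervalIntegral.integral_of_le hba]
      exact setIntegral_le_integral h2
        (Filter.Eventually.of_forall fun x => mul_nonneg (sq_nonneg _) (hKpos x).le)
    linarith
  -- bound on the symmetric interval integrals
  have hbound' : ∀ n : ℕ, (∫ ξ in (-(n:ℝ))..(n:ℝ), c ^ 2 * ξ ^ 2 * (u ξ) ^ 2 * K ξ) ≤ I' := by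
    intro n
    refine le_of_forall_pos_le_add (fun ε hε => ?_)
    obtain ⟨a, ha1, ha2⟩ := bdryR n (ε / 2) (by positivity)
    obtain ⟨b, hb1, hb2⟩ := bdryL n (ε / 2) (by positivity)
    have h0a : 0 ≤ a := le_trans (le_trans zero_le_one (le_max_right _ _)) ha1
    have hb0 : b ≤ 0 := hb1.trans (by
      have : (0:ℝ) ≤ max (n:ℝ) 1 := le_trans zero_le_one (le_max_right _ _)
      linarith)
    have hstep : (∫ ξ in (-(n:ℝ))..(n:ℝ), c ^ 2 * ξ ^ 2 * (u ξ) ^ 2 * K ξ)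
        ≤ ∫ ξ in b..a, c ^ 2 * ξ ^ 2 * (u ξ) ^ 2 * K ξ := by
      refine intervalIntegral.integral_mono_interval ?_ (by linarith [Nat.cast_nonneg (α := ℝ) n]) ?_
        (Filter.Eventually.of_forall fun x =>
          mul_nonneg (by positivity) (hKpos x).le) (hcont0.intervalIntegrable b a)
      · exact hb1.trans (neg_le_neg (le_max_left _ _))
      · exact le_trans (le_max_left _ _) ha1
    have := main a b hb0 h0a
    linarith
  -- integrability of the weighted square
  have hneg : Filter.Tendsto (fun n : ℕ => -(n:ℝ)) Filter.atTop Filter.atBot :=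
    Filter.tendsto_neg_atBot_iff.mpr tendsto_natCast_atTop_atTop
  have hpos : Filter.Tendsto (fun n : ℕ => (n:ℝ)) Filter.atTop Filter.atTop :=
    tendsto_natCast_atTop_atTop
  have hbound : ∀ n : ℕ, (∫ ξ in (-(n:ℝ))..(n:ℝ), ‖c ^ 2 * ξ ^ 2 * (u ξ) ^ 2 * K ξ‖) ≤ I' := by
    intro n
    have : ∀ ξ : ℝ, ‖c ^ 2 * ξ ^ 2 * (u ξ) ^ 2 * K ξ‖ = c ^ 2 * ξ ^ 2 * (u ξ) ^ 2 * K ξ :=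
      fun ξ => Real.norm_of_nonneg (mul_nonneg (by positivity) (hKpos ξ).le)
    rw [intervalIntegral.integral_congr (fun x _ => this x)]
    exact hbound' n
  have hInt : Integrable (fun ξ : ℝ => c ^ 2 * ξ ^ 2 * (u ξ) ^ 2 * K ξ) :=
    integrable_of_intervalIntegral_norm_bounded (a := fun n : ℕ => -(n:ℝ))
      (b := fun n : ℕ => (n:ℝ)) I'
      (fun n => (hcont0.intervalIntegrable _ _).1) hneg hpos
      (Filter.Eventually.of_forall hbound)
  have hlim := intervalIntegral_tendsto_integral hInt hneg hpos
  have hIle : (∫ ξ, c ^ 2 * ξ ^ 2 * (u ξ) ^ 2 * K ξ) ≤ I' :=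
    le_of_tendsto hlim (Filter.Eventually.of_forall hbound')
  -- conclude
  have hsplit : (∫ ξ, c ^ 2 * ξ ^ 2 * (u ξ) ^ 2 * K ξ)
      = c ^ 2 * ∫ ξ, u ξ ^ 2 * ξ ^ 2 * K ξ := by
    simp_rw [show ∀ ξ : ℝ, c ^ 2 * ξ ^ 2 * (u ξ) ^ 2 * K ξ = c ^ 2 * (u ξ ^ 2 * ξ ^ 2 * K ξ)
      from fun ξ => by ring]
    exact integral_const_mul _ _
  rw [hsplit] at hIle
  have hcc : (16 * ν ^ 2) * c ^ 2 = 1 := by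
    rw [hc_def]; field_simp; ring
  have hnn : (0:ℝ) ≤ 16 * ν ^ 2 := by positivity
  calc (∫ ξ, u ξ ^ 2 * ξ ^ 2 * K ξ)
      = (16 * ν ^ 2) * (c ^ 2 * ∫ ξ, u ξ ^ 2 * ξ ^ 2 * K ξ) := by
        rw [← mul_assoc, hcc, one_mul]
    _ ≤ (16 * ν ^ 2) * I' := mul_le_mul_of_nonneg_left hIle hnn
end

section
/- Let K(ξ) = exp(ξ²/(4ν)) for ν > 0. If u ∈ H¹(K), then the function ξ ↦ K(ξ)^{1/2} u(ξ) belongs to L^∞(ℝ), i.e. is essentially bounded. -/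
open MeasureTheory Real

/-- If `u ∈ H¹(K)` with `K ξ = exp (ξ²/(4ν))`, then `K^{1/2} u ∈ L^∞(ℝ)`,
i.e. `ξ ↦ √(K ξ) * u ξ` is essentially bounded. -/
theorem stmt2 (ν : ℝ) (hν : 0 < ν)
    (K : ℝ → ℝ) (hK : ∀ ξ, K ξ = Real.exp (ξ ^ 2 / (4 * ν)))
    (u : ℝ → ℝ) (hu : Differentiable ℝ u)
    (hu2 : Integrable (fun ξ => u ξ ^ 2 * K ξ))
    (hu2' : Integrable (fun ξ => (deriv u ξ) ^ 2 * K ξ)) :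
    ∃ M : ℝ, ∀ᵐ ξ : ℝ, |Real.sqrt (K ξ) * u ξ| ≤ M := by
  have hKpos : ∀ ξ, 0 < K ξ := fun ξ => by rw [hK]; exact Real.exp_pos _
  set g : ℝ → ℝ := fun ξ => u ξ ^ 2 * K ξ with hgdef
  set h : ℝ → ℝ := fun ξ => u ξ ^ 2 * K ξ + (deriv u ξ) ^ 2 * K ξ with hhdef
  set g' : ℝ → ℝ :=
    fun ξ => 2 * u ξ * deriv u ξ * K ξ + u ξ ^ 2 * (ξ / (2 * ν) * K ξ) with hg'def
  -- derivative of K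
  have hKd : ∀ ξ, HasDerivAt K (ξ / (2 * ν) * K ξ) ξ := by
    intro ξ
    have h1 : HasDerivAt (fun x : ℝ => x ^ 2 / (4 * ν)) (2 * ξ / (4 * ν)) ξ := by
      simpa using (hasDerivAt_pow 2 ξ).div_const (4 * ν)
    have h2 : HasDerivAt (fun x : ℝ => Real.exp (x ^ 2 / (4 * ν)))
        (Real.exp (ξ ^ 2 / (4 * ν)) * (2 * ξ / (4 * ν))) ξ :=
      h1.exp
    have heq : (fun x : ℝ => Real.exp (x ^ 2 / (4 * ν))) = K := by
      funext x; rw [hK]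
    rw [heq] at h2
    convert h2 using 1
    rw [hK]
    field_simp
    ring
  -- derivative of g
  have hgd : ∀ ξ, HasDerivAt g (g' ξ) ξ := by
    intro ξ
    have hud : HasDerivAt u (deriv u ξ) ξ := (hu ξ).hasDerivAt
    have : HasDerivAt (fun x => u x ^ 2 * K x) _ ξ := ((hud.pow 2).mul (hKd ξ))
    convert this using 1
    simp only [hg'def, Pi.pow_apply]
    ring
  -- h is nonneg and integrable
  have hh_nonneg : ∀ ξ, 0 ≤ h ξ := fun ξ => by
    have := (hKpos ξ).le
    positivity
  have hh_int : Integrable h := hu2.add hu2'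
  set A : ℝ := ∫ ξ, h ξ with hAdef
  -- cross term bound
  have hcross : ∀ ξ, |2 * u ξ * deriv u ξ * K ξ| ≤ h ξ := by
    intro ξ
    have hK0 := (hKpos ξ).le
    rw [abs_le]
    simp only [hhdef]
    constructor
    · nlinarith [mul_nonneg (sq_nonneg (u ξ + deriv u ξ)) hK0]
    · nlinarith [mul_nonneg (sq_nonneg (u ξ - deriv u ξ)) hK0]
  -- measurability
  have hm1 : Measurable (deriv u) := measurable_deriv u
  have hm2 : Measurable u := hu.continuous.measurable
  have hKc : Continuous K := by
    have : K = fun x => Real.exp (x ^ 2 / (4 * ν)) := by funext x; rw [hK]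
    rw [this]; fun_prop
  have hm3 : Measurable K := hKc.measurable
  -- interval integrability of g'
  have hint : ∀ a b : ℝ, IntervalIntegrable g' volume a b := by
    intro a b
    have hcrossInt : IntervalIntegrable (fun ξ => 2 * u ξ * deriv u ξ * K ξ) volume a b := by
      rw [intervalIntegrable_iff]
      refine (hh_int.integrableOn).mono' ?_ ?_
      · exact (((measurable_const.mul hm2).mul hm1).mul hm3).aestronglyMeasurable
      · exact Filter.Eventually.of_forall fun ξ => by
          rw [Real.norm_eq_abs]; exact hcross ξ
    have hrest : IntervalIntegrable (fun ξ => u ξ ^ 2 * (ξ / (2 * ν) * K ξ)) volume a b := by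
      apply Continuous.intervalIntegrable
      exact (hu.continuous.pow 2).mul ((continuous_id.div_const _).mul hKc)
    simpa only [hg'def] using hcrossInt.add hrest
  have hhint : ∀ a b : ℝ, IntervalIntegrable h volume a b :=
    fun a b => hh_int.intervalIntegrable
  -- interval integral of h is at most A
  have hhA : ∀ a b : ℝ, a ≤ b → (∫ t in a..b, h t) ≤ A := by
    intro a b hab
    rw [intervalIntegral.integral_of_le hab]
    calc (∫ t in Set.Ioc a b, h t) ≤ ∫ t, h t := by
          apply setIntegral_le_integral hh_int
          exact Filter.Eventually.of_forall hh_nonneg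
      _ = A := rfl
  -- existence of points with small g on the right and left
  have hsmall : ∀ x : ℝ, ∀ ε : ℝ, 0 < ε →
      (∃ y, x ≤ y ∧ g y < ε) ∧ (∃ y, y ≤ x ∧ g y < ε) := by
    intro x ε hε
    have hmes : volume {ξ : ℝ | ε ≤ g ξ} < ⊤ := hu2.measure_ge_lt_top hε
    constructor
    · by_contra hc
      push_neg at hc
      have hsub : Set.Ici x ⊆ {ξ : ℝ | ε ≤ g ξ} := fun y hy => (hc y hy)
      have h1 : volume (Set.Ici x) ≤ volume {ξ : ℝ | ε ≤ g ξ} := measure_mono hsub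
      rw [Real.volume_Ici] at h1
      exact absurd (lt_of_le_of_lt h1 hmes) (lt_irrefl ⊤)
    · by_contra hc
      push_neg at hc
      have hsub : Set.Iic x ⊆ {ξ : ℝ | ε ≤ g ξ} := fun y hy => (hc y hy)
      have h1 : volume (Set.Iic x) ≤ volume {ξ : ℝ | ε ≤ g ξ} := measure_mono hsub
      rw [Real.volume_Iic] at h1
      exact absurd (lt_of_le_of_lt h1 hmes) (lt_irrefl ⊤)
  -- main pointwise bound
  have key : ∀ x, g x ≤ A := by
    intro x
    by_contra hgt
    push_neg at hgt
    have hA0 : 0 ≤ A := integral_nonneg hh_nonneg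
    have hε : (0:ℝ) < g x - A := by linarith
    rcases le_total 0 x with hx | hx
    · obtain ⟨y, hxy, hy⟩ := (hsmall x (g x - A) hε).1
      have hFTC : (∫ t in x..y, g' t) = g y - g x :=
        intervalIntegral.integral_eq_sub_of_hasDerivAt (fun t _ => hgd t) (hint x y)
      have hmono : (∫ t in x..y, (fun t => -g' t) t) ≤ ∫ t in x..y, h t := by
        apply intervalIntegral.integral_mono_on hxy ((hint x y).neg) (hhint x y)
        intro t ht
        have ht0 : 0 ≤ t := le_trans hx ht.1
        have hterm : 0 ≤ u t ^ 2 * (t / (2 * ν) * K t) := by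
          have := (hKpos t).le
          positivity
        have := hcross t
        have := abs_le.1 this
        simp only [hg'def, hhdef, Pi.neg_apply]
        simp only [hhdef] at this
        linarith [this.1]
      rw [intervalIntegral.integral_neg] at hmono
      have := hhA x y hxy
      linarith [hFTC ▸ hmono]
    · obtain ⟨y, hxy, hy⟩ := (hsmall x (g x - A) hε).2
      have hFTC : (∫ t in y..x, g' t) = g x - g y :=
        intervalIntegral.integral_eq_sub_of_hasDerivAt (fun t _ => hgd t) (hint y x)
      have hmono : (∫ t in y..x, g' t) ≤ ∫ t in y..x, h t := by
        apply intervalIntegral.integral_mono_on hxy (hint y x) (hhint y x)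
        intro t ht
        have ht0 : t ≤ 0 := le_trans ht.2 hx
        have hterm : u t ^ 2 * (t / (2 * ν) * K t) ≤ 0 := by
          apply mul_nonpos_of_nonneg_of_nonpos (sq_nonneg _)
          apply mul_nonpos_of_nonpos_of_nonneg _ (hKpos t).le
          exact div_nonpos_of_nonpos_of_nonneg ht0 (by linarith)
        have := abs_le.1 (hcross t)
        simp only [hg'def, hhdef]
        simp only [hhdef] at this
        linarith [this.2]
      have := hhA y x hxy
      linarith [hFTC ▸ hmono]
  -- conclude
  refine ⟨Real.sqrt A, Filter.Eventually.of_forall fun ξ => ?_⟩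
  have h1 : (Real.sqrt (K ξ) * u ξ) ^ 2 = g ξ := by
    rw [mul_pow, Real.sq_sqrt (hKpos ξ).le]
    simp only [hgdef]; ring
  have h2 : |Real.sqrt (K ξ) * u ξ| = Real.sqrt (g ξ) := by
    rw [← h1, Real.sqrt_sq_eq_abs]
  rw [h2]
  exact Real.sqrt_le_sqrt (key ξ)
end

section
/- Let K(ξ) = exp(ξ²/(4ν)) with ν > 0. For any q > 2 and any ε > 0, there exist constants C > 0 and R > 0 such that for all u ∈ H¹(K), ∫_ℝ |u|² K dξ ≤ ε ∫_ℝ |u'|² K dξ + C (∫_{-R}^{R} |u|^q dξ)^{2/q}. -/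
open MeasureTheory Real Set Filter

set_option maxHeartbeats 1000000

private lemma abs2mul (a b k : ℝ) (hk : 0 ≤ k) :
    ‖2 * a * b * k‖ ≤ a ^ 2 * k + b ^ 2 * k := by
  rw [Real.norm_eq_abs, abs_mul, abs_of_nonneg hk]
  have h1 : |2 * a * b| ≤ a ^ 2 + b ^ 2 := by
    rw [abs_mul, abs_mul, abs_two]
    nlinarith [sq_nonneg (|a| - |b|), sq_abs a, sq_abs b, abs_nonneg a, abs_nonneg b]
  nlinarith

private lemma half_bound (ν : ℝ) (hν : 0 < ν) (u : ℝ → ℝ) (hu : Differentiable ℝ u)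
    (h2 : Integrable fun ξ => u ξ ^ 2 * Real.exp (ξ ^ 2 / (4 * ν)))
    (h2' : Integrable fun ξ => (deriv u ξ) ^ 2 * Real.exp (ξ ^ 2 / (4 * ν)))
    {R : ℝ} (hR : 0 < R) :
    ∫ ξ in Set.Ioi R, u ξ ^ 2 * Real.exp (ξ ^ 2 / (4 * ν))
      ≤ (2 * ν / R) * ((∫ ξ, u ξ ^ 2 * Real.exp (ξ ^ 2 / (4 * ν)))
          + ∫ ξ, (deriv u ξ) ^ 2 * Real.exp (ξ ^ 2 / (4 * ν))) := by
  set Kf : ℝ → ℝ := fun ξ => Real.exp (ξ ^ 2 / (4 * ν)) with hKf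
  set A : ℝ := ∫ ξ, u ξ ^ 2 * Kf ξ with hA
  set B : ℝ := ∫ ξ, (deriv u ξ) ^ 2 * Kf ξ with hB
  set h : ℝ → ℝ := fun ξ => 2 * u ξ * deriv u ξ * Kf ξ with hh_def
  set g : ℝ → ℝ := fun ξ => u ξ ^ 2 * (ξ / (2 * ν) * Kf ξ) with hg_def
  have hKpos : ∀ ξ, 0 < Kf ξ := fun ξ => Real.exp_pos _
  have hKcont : Continuous Kf :=
    Real.continuous_exp.comp ((continuous_pow 2).div_const (4 * ν))
  have hucont : Continuous u := hu.continuous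
  have hKd : ∀ x : ℝ, HasDerivAt Kf (x / (2 * ν) * Kf x) x := by
    intro x
    have h1 : HasDerivAt (fun ξ : ℝ => ξ ^ 2 / (4 * ν)) (2 * x / (4 * ν)) x := by
      simpa using (hasDerivAt_pow 2 x).div_const (4 * ν)
    have h2e := h1.exp
    convert h2e using 1
    field_simp
    simp only [hKf]; ring_nf
  have hfd : ∀ x : ℝ, HasDerivAt (fun ξ => u ξ ^ 2 * Kf ξ) (h x + g x) x := by
    intro x
    have h1 : HasDerivAt (fun ξ => u ξ ^ 2) (2 * u x * deriv u x) x := by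
      have := (hu x).hasDerivAt.fun_pow 2
      simpa [mul_comm, mul_assoc] using this
    exact h1.mul (hKd x)
  have hgcont : Continuous g :=
    (hucont.pow 2).mul ((continuous_id.div_const (2 * ν)).mul hKcont)
  have hhmeas : AEStronglyMeasurable h volume := by
    have m1 : Measurable (deriv u) := measurable_deriv u
    exact (((measurable_const.mul hucont.measurable).mul m1).mul
      hKcont.measurable).aestronglyMeasurable
  have hhbound : ∀ ξ, ‖h ξ‖ ≤ u ξ ^ 2 * Kf ξ + (deriv u ξ) ^ 2 * Kf ξ := fun ξ =>
    abs2mul (u ξ) (deriv u ξ) (Kf ξ) (hKpos ξ).le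
  have hhInt : Integrable h := (h2.add h2').mono' hhmeas (Filter.Eventually.of_forall hhbound)
  have hIh : ∫ ξ, ‖h ξ‖ ≤ A + B := by
    have h0 : ∫ ξ, ‖h ξ‖ ≤ ∫ ξ, (u ξ ^ 2 * Kf ξ + (deriv u ξ) ^ 2 * Kf ξ) :=
      integral_mono hhInt.norm (h2.add h2') hhbound
    have h1 : ∫ ξ, (u ξ ^ 2 * Kf ξ + (deriv u ξ) ^ 2 * Kf ξ) = A + B := integral_add h2 h2'
    linarith
  have hinth : ∀ a b : ℝ, a ≤ b → |∫ ξ in a..b, h ξ| ≤ A + B := by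
    intro a b hab
    rw [intervalIntegral.integral_of_le hab]
    calc |∫ ξ in Ioc a b, h ξ| ≤ ∫ ξ in Ioc a b, ‖h ξ‖ := by
          simpa [Real.norm_eq_abs] using norm_integral_le_integral_norm (μ := volume.restrict (Ioc a b)) h
      _ ≤ ∫ ξ, ‖h ξ‖ :=
          setIntegral_le_integral hhInt.norm (Filter.Eventually.of_forall fun x => norm_nonneg _)
      _ ≤ A + B := hIh
  have hdelta : ∀ T δ : ℝ, 0 < δ → ∃ T', T ≤ T' ∧ u T' ^ 2 * Kf T' ≤ δ := by
    intro T δ hδ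
    by_contra hcon
    push_neg at hcon
    have hint : Integrable (fun _ : ℝ => δ) (volume.restrict (Ioi T)) := by
      refine (h2.restrict (s := Ioi T)).mono aestronglyMeasurable_const ?_
      refine (ae_restrict_iff' measurableSet_Ioi).mpr (Filter.Eventually.of_forall fun x hx => ?_)
      have := (hcon x (le_of_lt hx))
      rw [Real.norm_eq_abs, Real.norm_eq_abs, abs_of_nonneg hδ.le,
        abs_of_nonneg (by positivity : (0:ℝ) ≤ u x ^ 2 * Kf x)]
      linarith
    rw [integrable_const_iff] at hint
    rcases hint with hc | hc
    · linarith
    · have := hc.measure_univ_lt_top; simp [Real.volume_Ioi] at this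
  have hFTC : ∀ T : ℝ, R ≤ T →
      ∫ ξ in R..T, g ξ = u T ^ 2 * Kf T - u R ^ 2 * Kf R - ∫ ξ in R..T, h ξ := by
    intro T hT
    have hint : IntervalIntegrable (fun x => h x + g x) volume R T :=
      (hhInt.intervalIntegrable).add (hgcont.intervalIntegrable _ _)
    have h0 := intervalIntegral.integral_eq_sub_of_hasDerivAt (fun x _ => hfd x) hint
    rw [intervalIntegral.integral_add hhInt.intervalIntegrable (hgcont.intervalIntegrable _ _)] at h0
    linarith [h0]
  have hgnonneg : ∀ x : ℝ, R ≤ x → 0 ≤ g x := by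
    intro x hx
    have hx0 : (0:ℝ) ≤ x := le_trans hR.le hx
    exact mul_nonneg (sq_nonneg _) (mul_nonneg (div_nonneg hx0 (by positivity)) (hKpos x).le)
  have claim : ∀ T : ℝ, R ≤ T → ∫ ξ in R..T, g ξ ≤ A + B := by
    intro T hT
    refine le_of_forall_pos_le_add fun δ hδ => ?_
    obtain ⟨T', hTT', hfT'⟩ := hdelta T δ hδ
    have hRT' : R ≤ T' := le_trans hT hTT'
    have hsplit : ∫ ξ in R..T', g ξ = (∫ ξ in R..T, g ξ) + ∫ ξ in T..T', g ξ :=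
      (intervalIntegral.integral_add_adjacent_intervals (hgcont.intervalIntegrable _ _)
        (hgcont.intervalIntegrable _ _)).symm
    have hpos : 0 ≤ ∫ ξ in T..T', g ξ :=
      intervalIntegral.integral_nonneg hTT' fun x hx => hgnonneg x (le_trans hT hx.1)
    have hFT := hFTC T' hRT'
    have hb := hinth R T' hRT'
    have hfR : (0:ℝ) ≤ u R ^ 2 * Kf R := by positivity
    have habs := abs_le.mp hb
    linarith [habs.1, habs.2]
  have hbn : Tendsto (fun n : ℕ => R + (n:ℝ)) atTop atTop :=
    tendsto_atTop_add_const_left _ _ tendsto_natCast_atTop_atTop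
  have hIocInt : ∀ n : ℕ, IntegrableOn g (Ioc R (R + (n:ℝ))) := fun n =>
    hgcont.integrableOn_Ioc
  have hnorm_eq : ∀ n : ℕ, (∫ x in R..(R + (n:ℝ)), ‖g x‖) = ∫ x in R..(R + (n:ℝ)), g x := by
    intro n
    refine intervalIntegral.integral_congr fun x hx => ?_
    rw [Set.uIcc_of_le (le_add_of_nonneg_right (Nat.cast_nonneg n))] at hx
    exact Real.norm_of_nonneg (hgnonneg x hx.1)
  have hgInt : IntegrableOn g (Ioi R) := by
    refine integrableOn_Ioi_of_intervalIntegral_norm_bounded (A + B) R hIocInt hbn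
      (Filter.Eventually.of_forall fun n => ?_)
    rw [hnorm_eq n]
    exact claim _ (le_add_of_nonneg_right (Nat.cast_nonneg n))
  have hgle : ∫ x in Ioi R, g x ≤ A + B := by
    refine le_of_tendsto (intervalIntegral_tendsto_integral_Ioi R hgInt hbn)
      (Filter.Eventually.of_forall fun n => claim _ (le_add_of_nonneg_right (Nat.cast_nonneg n)))
  calc ∫ ξ in Set.Ioi R, u ξ ^ 2 * Kf ξ
      ≤ ∫ x in Ioi R, (2 * ν / R) * g x := by
        refine setIntegral_mono_on h2.integrableOn (hgInt.const_mul _) measurableSet_Ioi ?_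
        intro x hx
        have hx' : R < x := hx
        have hx0 : (0:ℝ) < x := lt_trans hR hx'
        have he : (2 * ν / R) * g x = (x / R) * (u x ^ 2 * Kf x) := by
          simp only [hg_def]
          field_simp
        rw [he]
        exact le_mul_of_one_le_left (by positivity) ((one_le_div hR).mpr hx'.le)
    _ = (2 * ν / R) * ∫ x in Ioi R, g x := by
        simpa using MeasureTheory.integral_const_mul (μ := volume.restrict (Ioi R)) (2 * ν / R) g
    _ ≤ (2 * ν / R) * (A + B) := by
        exact mul_le_mul_of_nonneg_left hgle (by positivity)

/-- Interpolation-type inequality: for any `q > 2` and `ε > 0` there are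
`C > 0`, `R > 0` with `∫ u² K ≤ ε ∫ (u')² K + C (∫_{-R}^R |u|^q)^{2/q}`
for all `u ∈ H¹(K)`, `K ξ = exp (ξ²/(4ν))`. -/
theorem stmt7 (ν : ℝ) (hν : 0 < ν)
    (K : ℝ → ℝ) (hK : ∀ ξ, K ξ = Real.exp (ξ ^ 2 / (4 * ν)))
    (q : ℝ) (hq : 2 < q) (ε : ℝ) (hε : 0 < ε) :
    ∃ C > (0 : ℝ), ∃ R > (0 : ℝ), ∀ u : ℝ → ℝ, Differentiable ℝ u →
      Integrable (fun ξ => u ξ ^ 2 * K ξ) →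
      Integrable (fun ξ => (deriv u ξ) ^ 2 * K ξ) →
      ∫ ξ, u ξ ^ 2 * K ξ
        ≤ ε * (∫ ξ, (deriv u ξ) ^ 2 * K ξ)
          + C * (∫ ξ in Set.Ioo (-R) R, |u ξ| ^ q) ^ (2 / q) := by
  have hKfun : K = fun ξ => Real.exp (ξ ^ 2 / (4 * ν)) := funext hK
  subst hKfun
  set Kf : ℝ → ℝ := fun ξ => Real.exp (ξ ^ 2 / (4 * ν)) with hKf
  set R : ℝ := 1 + 8 * ν + 8 * ν / ε with hRdef
  have hR : (0:ℝ) < R := by positivity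
  set eR : ℝ := Real.exp (R ^ 2 / (4 * ν)) with heR
  set C : ℝ := 2 * eR * (2 * R) ^ (1 - 2 / q) with hCdef
  have hC : (0:ℝ) < C := by
    have : (0:ℝ) < (2 * R) ^ (1 - 2 / q) := Real.rpow_pos_of_pos (by linarith) _
    positivity
  refine ⟨C, hC, R, hR, ?_⟩
  intro u hu h2 h2'
  have hucont : Continuous u := hu.continuous
  set A : ℝ := ∫ ξ, u ξ ^ 2 * Kf ξ with hA
  set B : ℝ := ∫ ξ, (deriv u ξ) ^ 2 * Kf ξ with hB
  set M : ℝ := (∫ ξ in Set.Ioo (-R) R, |u ξ| ^ q) ^ (2 / q) with hM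
  have hA0 : 0 ≤ A := integral_nonneg fun x => by positivity
  have hB0 : 0 ≤ B := integral_nonneg fun x => by positivity
  have hM0 : 0 ≤ M := by
    apply Real.rpow_nonneg
    exact integral_nonneg fun x => by positivity
  -- right half
  have hOr : ∫ ξ in Ioi R, u ξ ^ 2 * Kf ξ ≤ (2 * ν / R) * (A + B) :=
    half_bound ν hν u hu h2 h2' hR
  -- left half via reflection
  have hneg : ∀ F : ℝ → ℝ, Integrable F → Integrable (fun ξ => F (-ξ)) := by
    intro F hF
    exact ((Measure.measurePreserving_neg volume).integrable_comp_emb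
      (Homeomorph.neg ℝ).isClosedEmbedding.measurableEmbedding).mpr hF
  set w : ℝ → ℝ := fun ξ => u (-ξ) with hwdef
  have hw : Differentiable ℝ w := hu.comp differentiable_id.neg
  have hdw : ∀ ξ, deriv w ξ = -deriv u (-ξ) := by
    intro ξ
    rw [hwdef]
    exact deriv_comp_neg u ξ
  have hw2 : Integrable fun ξ => w ξ ^ 2 * Kf ξ := by
    have := hneg (fun t => u t ^ 2 * Kf t) h2
    refine this.congr (Filter.Eventually.of_forall fun ξ => ?_)
    simp [hwdef, hKf, neg_sq]
  have hw2' : Integrable fun ξ => (deriv w ξ) ^ 2 * Kf ξ := by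
    have := hneg (fun t => deriv u t ^ 2 * Kf t) h2'
    refine this.congr (Filter.Eventually.of_forall fun ξ => ?_)
    simp [hdw ξ, hKf, neg_sq]
  have hOl' := half_bound ν hν w hw hw2 hw2' hR
  have he1 : ∫ x in Ioi R, w x ^ 2 * Kf x = ∫ x in Iic (-R), u x ^ 2 * Kf x := by
    rw [← integral_comp_neg_Ioi]
    refine setIntegral_congr_fun measurableSet_Ioi fun x _ => ?_
    simp [hwdef, hKf, neg_sq]
  have he2 : ∫ ξ, w ξ ^ 2 * Kf ξ = A := by
    rw [hA, ← integral_neg_eq_self (fun ξ => u ξ ^ 2 * Kf ξ) volume]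
    refine integral_congr_ae (Filter.Eventually.of_forall fun ξ => ?_)
    simp [hwdef, hKf, neg_sq]
  have he3 : ∫ ξ, (deriv w ξ) ^ 2 * Kf ξ = B := by
    rw [hB, ← integral_neg_eq_self (fun ξ => (deriv u ξ) ^ 2 * Kf ξ) volume]
    refine integral_congr_ae (Filter.Eventually.of_forall fun ξ => ?_)
    simp [hdw ξ, hKf, neg_sq]
  have hOl : ∫ x in Iic (-R), u x ^ 2 * Kf x ≤ (2 * ν / R) * (A + B) := by
    rw [← he1]
    calc ∫ x in Ioi R, w x ^ 2 * Kf x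
        ≤ (2 * ν / R) * ((∫ ξ, w ξ ^ 2 * Kf ξ) + ∫ ξ, (deriv w ξ) ^ 2 * Kf ξ) := hOl'
      _ = (2 * ν / R) * (A + B) := by rw [he2, he3]
  -- splitting
  have hRR : -R ≤ R := by linarith
  have hsplit2 : (∫ x in Iic (-R), u x ^ 2 * Kf x) + ∫ x in Ioc (-R) R, u x ^ 2 * Kf x
      = ∫ x in Iic R, u x ^ 2 * Kf x := by
    rw [← setIntegral_union (Iic_disjoint_Ioc le_rfl) measurableSet_Ioc
      h2.integrableOn h2.integrableOn, Iic_union_Ioc_eq_Iic hRR]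
  have hsplit1 : (∫ x in Iic R, u x ^ 2 * Kf x) + ∫ x in Ioi R, u x ^ 2 * Kf x = A :=
    intervalIntegral.integral_Iic_add_Ioi h2.integrableOn h2.integrableOn
  -- middle part
  have hmid1 : ∫ x in Ioc (-R) R, u x ^ 2 * Kf x ≤ ∫ x in Ioc (-R) R, u x ^ 2 * eR := by
    refine setIntegral_mono_on h2.integrableOn
      (((hucont.pow 2).mul continuous_const).integrableOn_Ioc) measurableSet_Ioc ?_
    intro x hx
    have hxx : x ^ 2 ≤ R ^ 2 := sq_le_sq' (by linarith [hx.1]) hx.2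
    have hKle : Kf x ≤ eR := by
      rw [hKf, heR]
      exact Real.exp_le_exp.mpr (by gcongr)
    exact mul_le_mul_of_nonneg_left hKle (sq_nonneg _)
  have hmid2 : ∫ x in Ioc (-R) R, u x ^ 2 * eR = eR * ∫ x in Ioo (-R) R, u x ^ 2 := by
    rw [integral_mul_const, integral_Ioc_eq_integral_Ioo, mul_comm]
  -- Hölder
  set p : ℝ := q / 2 with hpdef
  have hp1 : 1 < p := by rw [hpdef]; linarith
  have hpq : p.HolderConjugate (Real.conjExponent p) := Real.HolderConjugate.conjExponent hp1
  set μ' := volume.restrict (Ioo (-R) R) with hμ'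
  haveI : IsFiniteMeasure μ' := by
    constructor
    rw [hμ', Measure.restrict_apply_univ, Real.volume_Ioo]
    exact ENNReal.ofReal_lt_top
  obtain ⟨Cb, hCb⟩ := isCompact_Icc.exists_bound_of_continuousOn
    (s := Icc (-R) R) ((hucont.pow 2).continuousOn)
  have hmemf : MemLp (fun x => u x ^ 2) (ENNReal.ofReal p) μ' := by
    have htop : MemLp (fun x => u x ^ 2) ⊤ μ' := by
      refine memLp_top_of_bound ((hucont.pow 2).aestronglyMeasurable) Cb ?_
      exact (ae_restrict_iff' measurableSet_Ioo).mpr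
        (Filter.Eventually.of_forall fun x hx => hCb x (Ioo_subset_Icc_self hx))
    exact htop.mono_exponent le_top
  have hmemg : MemLp (fun _ : ℝ => (1:ℝ)) (ENNReal.ofReal (Real.conjExponent p)) μ' :=
    memLp_const 1
  have hholder := integral_mul_le_Lp_mul_Lq_of_nonneg (μ := μ') hpq
    (Filter.Eventually.of_forall fun x => sq_nonneg (u x))
    (Filter.Eventually.of_forall fun _ => zero_le_one) hmemf hmemg
  have hq0 : (0:ℝ) < q := by linarith
  have hpow : ∀ x : ℝ, (u x ^ 2) ^ p = |u x| ^ q := by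
    intro x
    rw [← sq_abs, ← Real.rpow_natCast |u x| 2, ← Real.rpow_mul (abs_nonneg _)]
    congr 1
    rw [hpdef]
    push_cast
    ring
  have hone : ∫ x, (1:ℝ) ^ (Real.conjExponent p) ∂μ' = 2 * R := by
    simp only [Real.one_rpow]
    rw [integral_const, smul_eq_mul, mul_one, hμ', Measure.real, Measure.restrict_apply_univ, Real.volume_Ioo,
      ENNReal.toReal_ofReal (by linarith)]
    ring
  have hinvp : 1 / p = 2 / q := by
    rw [hpdef]
    field_simp
  have hinvp' : 1 / Real.conjExponent p = 1 - 2 / q := by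
    have h1 := hpq.inv_add_inv_eq_one
    rw [one_div, ← hinvp, one_div]
    have : p⁻¹ = 1/p := (one_div p).symm
    linarith [h1]
  have hholder2 : ∫ x in Ioo (-R) R, u x ^ 2 ≤ M * (2 * R) ^ (1 - 2 / q) := by
    have h0 : ∫ x, u x ^ 2 * 1 ∂μ' = ∫ x in Ioo (-R) R, u x ^ 2 := by
      simp [hμ']
    have h1 : ∫ x, (u x ^ 2) ^ p ∂μ' = ∫ ξ in Set.Ioo (-R) R, |u ξ| ^ q := by
      rw [hμ']
      exact integral_congr_ae (Filter.Eventually.of_forall fun x => hpow x)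
    rw [h0, h1, hone, hinvp, hinvp'] at hholder
    rw [hM]
    exact hholder
  -- final assembly
  have hc1 : 2 * ν / R ≤ 1 / 4 := by
    rw [div_le_iff₀ hR]
    have h0 : (0:ℝ) ≤ 8 * ν / ε := by positivity
    linarith [hRdef, h0]
  have hc2 : 2 * ν / R ≤ ε / 4 := by
    have h8 : 8 * ν / ε ≤ R := by
      rw [hRdef]
      linarith [hν.le]
    have hd : (0:ℝ) < 8 * ν / ε := by positivity
    calc 2 * ν / R ≤ 2 * ν / (8 * ν / ε) := by
          apply div_le_div_of_nonneg_left (by positivity) hd h8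
      _ = ε / 4 := by
          rw [div_div_eq_mul_div]
          rw [div_eq_iff (by positivity : (8 * ν : ℝ) ≠ 0)]
          ring
  have hmid : ∫ x in Ioc (-R) R, u x ^ 2 * Kf x ≤ (C / 2) * M := by
    calc ∫ x in Ioc (-R) R, u x ^ 2 * Kf x
        ≤ eR * ∫ x in Ioo (-R) R, u x ^ 2 := by rw [← hmid2]; exact hmid1
      _ ≤ eR * (M * (2 * R) ^ (1 - 2 / q)) := by
          refine mul_le_mul_of_nonneg_left hholder2 ?_
          rw [heR]; positivity
      _ = (C / 2) * M := by rw [hCdef]; ring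
  have hcA : (2 * ν / R) * A ≤ (1/4) * A := mul_le_mul_of_nonneg_right hc1 hA0
  have hcB : (2 * ν / R) * B ≤ (ε/4) * B := mul_le_mul_of_nonneg_right hc2 hB0
  have hCM : (C / 2) * M ≤ (C / 2) * M := le_refl _
  show A ≤ ε * B + C * M
  have hOr' : ∫ x in Ioi R, u x ^ 2 * Kf x ≤ (1/4) * A + (ε/4) * B := by
    calc ∫ x in Ioi R, u x ^ 2 * Kf x ≤ (2 * ν / R) * (A + B) := hOr
      _ = (2 * ν / R) * A + (2 * ν / R) * B := by ring
      _ ≤ (1/4) * A + (ε/4) * B := add_le_add hcA hcB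
  have hOl2 : ∫ x in Iic (-R), u x ^ 2 * Kf x ≤ (1/4) * A + (ε/4) * B := by
    calc ∫ x in Iic (-R), u x ^ 2 * Kf x ≤ (2 * ν / R) * (A + B) := hOl
      _ = (2 * ν / R) * A + (2 * ν / R) * B := by ring
      _ ≤ (1/4) * A + (ε/4) * B := add_le_add hcA hcB
  linarith [hsplit1, hsplit2, hmid, hOr', hOl2]
end

section
/- Let K(ξ) = exp(ξ²/(4ν)) with ν > 0. For u ∈ H¹(K) ∩ L^∞(ℝ), the cubic convection term satisfies |∫_ℝ u(ξ)³ K'(ξ) dξ| ≤ C ‖u'‖_{L²(K)} ‖u‖_{L²(K)} ‖u‖_{L^∞(ℝ)} for some constant C depending only on ν, where K'(ξ) = (ξ/(2ν)) K(ξ). -/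
open MeasureTheory Real

open Set Filter in
/-- Cauchy–Schwarz for integrals. -/
lemma cs_aux {f g : ℝ → ℝ} (hf : AEStronglyMeasurable f volume)
    (hg : AEStronglyMeasurable g volume)
    (hf2 : Integrable (fun x => f x ^ 2)) (hg2 : Integrable (fun x => g x ^ 2)) :
    ∫ x, |f x| * |g x| ≤ Real.sqrt (∫ x, f x ^ 2) * Real.sqrt (∫ x, g x ^ 2) := by
  have hpq : Real.HolderConjugate 2 2 := Real.HolderConjugate.two_two
  have h2 : ENNReal.ofReal (2 : ℝ) = 2 := by norm_num
  have hfm : MemLp f (ENNReal.ofReal 2) volume := by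
    rw [h2]; exact (memLp_two_iff_integrable_sq hf).2 hf2
  have hgm : MemLp g (ENNReal.ofReal 2) volume := by
    rw [h2]; exact (memLp_two_iff_integrable_sq hg).2 hg2
  have H := integral_mul_norm_le_Lp_mul_Lq hpq hfm hgm
  simp only [Real.norm_eq_abs] at H
  have e1 : ∀ x : ℝ, |x| ^ (2 : ℝ) = x ^ 2 := by
    intro x
    rw [show ((2:ℝ) = ((2:ℕ):ℝ)) by norm_num, Real.rpow_natCast]
    exact sq_abs x
  simp only [e1] at H
  calc ∫ x, |f x| * |g x| ≤ (∫ x, f x ^ 2) ^ (1/2 : ℝ) * (∫ x, g x ^ 2) ^ (1/2 : ℝ) := H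
    _ = Real.sqrt (∫ x, f x ^ 2) * Real.sqrt (∫ x, g x ^ 2) := by
        rw [Real.sqrt_eq_rpow, Real.sqrt_eq_rpow]

open Set Filter in
/-- Main work horse: integrability and bound for the weighted integral on `Ioi 0`. -/
lemma half_aux (ν : ℝ) (hν : 0 < ν) (K : ℝ → ℝ)
    (hK : ∀ ξ, K ξ = Real.exp (ξ ^ 2 / (4 * ν)))
    (u : ℝ → ℝ) (hu : Differentiable ℝ u)
    (h2 : Integrable (fun ξ => u ξ ^ 2 * K ξ))
    (h2' : Integrable (fun ξ => (deriv u ξ) ^ 2 * K ξ)) :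
    IntegrableOn (fun ξ => u ξ ^ 2 * (ξ / (2 * ν)) * K ξ) (Ioi 0) ∧
      ∫ ξ in Ioi 0, u ξ ^ 2 * (ξ / (2 * ν)) * K ξ
        ≤ ∫ ξ, |2 * u ξ * deriv u ξ * K ξ| := by
  have hKpos : ∀ ξ, 0 < K ξ := fun ξ => by rw [hK]; exact Real.exp_pos _
  have hKeq : K = fun ξ => Real.exp (ξ ^ 2 / (4 * ν)) := funext hK
  have hKcont : Continuous K := by
    rw [hKeq]; exact Real.continuous_exp.comp ((continuous_pow 2).div_const _)
  have hucont : Continuous u := hu.continuous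
  set w : ℝ → ℝ := fun ξ => 2 * u ξ * deriv u ξ * K ξ with hw
  set f : ℝ → ℝ := fun ξ => u ξ ^ 2 * (ξ / (2 * ν)) * K ξ with hf
  have hfcont : Continuous f :=
    ((hucont.pow 2).mul (continuous_id.div_const _)).mul hKcont
  have hwmeas : AEStronglyMeasurable w volume := by
    apply Measurable.aestronglyMeasurable
    exact ((measurable_const.mul hucont.measurable).mul (measurable_deriv u)).mul
      hKcont.measurable
  have hwint : Integrable w := by
    refine (h2.add h2').mono hwmeas (ae_of_all _ fun ξ => ?_)
    have h1 : |w ξ| ≤ u ξ ^ 2 * K ξ + deriv u ξ ^ 2 * K ξ := by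
      have : |w ξ| = (2 * |u ξ| * |deriv u ξ|) * K ξ := by
        simp [hw, abs_mul, abs_of_pos (hKpos ξ)]
        try ring
      rw [this]
      have h2ab : 2 * |u ξ| * |deriv u ξ| ≤ |u ξ| ^ 2 + |deriv u ξ| ^ 2 := by
        nlinarith [sq_nonneg (|u ξ| - |deriv u ξ|)]
      have := mul_le_mul_of_nonneg_right h2ab (hKpos ξ).le
      calc (2 * |u ξ| * |deriv u ξ|) * K ξ
          ≤ (|u ξ| ^ 2 + |deriv u ξ| ^ 2) * K ξ := this
        _ = u ξ ^ 2 * K ξ + deriv u ξ ^ 2 * K ξ := by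
            rw [sq_abs, sq_abs]; ring
    refine h1.trans ?_
    have : 0 ≤ u ξ ^ 2 * K ξ + deriv u ξ ^ 2 * K ξ :=
      add_nonneg (mul_nonneg (sq_nonneg _) (hKpos ξ).le)
        (mul_nonneg (sq_nonneg _) (hKpos ξ).le)
    simp [Real.norm_eq_abs, abs_of_nonneg this]
  -- derivative of g = u² K
  have hKd : ∀ ξ, HasDerivAt K (ξ / (2 * ν) * K ξ) ξ := by
    intro ξ
    have h1 : HasDerivAt (fun ξ : ℝ => ξ ^ 2 / (4 * ν)) (ξ / (2 * ν)) ξ := by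
      have := (hasDerivAt_pow 2 ξ).div_const (4 * ν)
      refine this.congr_deriv ?_
      field_simp; ring
    have := h1.exp
    rw [hKeq]
    convert this using 1
    exact mul_comm _ _
  have hg : ∀ ξ, HasDerivAt (fun ξ => u ξ ^ 2 * K ξ) (w ξ + f ξ) ξ := by
    intro ξ
    have := (((hu ξ).hasDerivAt).pow 2).mul (hKd ξ)
    refine this.congr_deriv ?_
    simp [hw, hf]; ring
  set A : ℝ := ∫ ξ, |w ξ| with hA
  have hAnn : 0 ≤ A := integral_nonneg fun ξ => abs_nonneg _
  -- key interval estimate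
  have key : ∀ R : ℝ, 0 ≤ R →
      ∫ x in (0:ℝ)..R, f x ≤ u R ^ 2 * K R + A := by
    intro R hR
    have hww : IntervalIntegrable w volume 0 R := hwint.intervalIntegrable
    have hff : IntervalIntegrable f volume 0 R := hfcont.intervalIntegrable 0 R
    have ftc : ∫ x in (0:ℝ)..R, (w x + f x) = u R ^ 2 * K R - u 0 ^ 2 * K 0 :=
      intervalIntegral.integral_eq_sub_of_hasDerivAt (fun x _ => hg x) (hww.add hff)
    rw [intervalIntegral.integral_add hww hff] at ftc
    have hb : |∫ x in (0:ℝ)..R, w x| ≤ A := by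
      refine (intervalIntegral.abs_integral_le_integral_abs hR).trans ?_
      rw [intervalIntegral.integral_of_le hR]
      exact setIntegral_le_integral hwint.abs (ae_of_all _ fun ξ => abs_nonneg _)
    have h0 : 0 ≤ u 0 ^ 2 * K 0 := mul_nonneg (sq_nonneg _) (hKpos 0).le
    have habs := abs_le.1 hb
    linarith
  have keynorm : ∀ R : ℝ, 0 ≤ R →
      ∫ x in (0:ℝ)..R, ‖f x‖ = ∫ x in (0:ℝ)..R, f x := by
    intro R hR
    rw [intervalIntegral.integral_of_le hR, intervalIntegral.integral_of_le hR]
    refine setIntegral_congr_fun measurableSet_Ioc fun x hx => ?_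
    have hx0 : 0 < x := hx.1
    have hx' : 0 ≤ x / (2 * ν) := div_nonneg hx0.le (by positivity)
    have : 0 ≤ f x := mul_nonneg (mul_nonneg (sq_nonneg _) hx') (hKpos x).le
    simp [Real.norm_eq_abs, abs_of_nonneg this]
  -- small values of u² K at arbitrarily large points
  have small : ∀ ε : ℝ, 0 < ε → ∀ N : ℝ, ∃ R, N ≤ R ∧ 0 ≤ R ∧ u R ^ 2 * K R < ε := by
    intro ε hε N
    by_contra h
    push_neg at h
    have hsub : Ici (max N 0) ⊆ {a : ℝ | ε ≤ u a ^ 2 * K a} := by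
      intro a ha
      have h1 : N ≤ a := le_trans (le_max_left _ _) ha
      have h2 : (0:ℝ) ≤ a := le_trans (le_max_right _ _) ha
      exact (h a h1 h2)
    have hfin := h2.measure_ge_lt_top hε
    have : volume (Ici (max N 0)) ≤ volume {a : ℝ | ε ≤ u a ^ 2 * K a} :=
      measure_mono hsub
    rw [Real.volume_Ici] at this
    exact lt_irrefl _ (lt_of_le_of_lt this hfin)
  -- sequences
  have seq : ∀ ε : ℝ, 0 < ε → ∃ R : ℕ → ℝ,
      (∀ n : ℕ, (n : ℝ) ≤ R n ∧ 0 ≤ R n ∧ u (R n) ^ 2 * K (R n) < ε) := by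
    intro ε hε
    choose R hR1 hR2 hR3 using fun n : ℕ => small ε hε (n : ℝ)
    exact ⟨R, fun n => ⟨hR1 n, hR2 n, hR3 n⟩⟩
  obtain ⟨R₁, hR₁⟩ := seq 1 one_pos
  have hT₁ : Tendsto R₁ atTop atTop :=
    tendsto_atTop_mono (fun n => (hR₁ n).1) tendsto_natCast_atTop_atTop
  have hInt : IntegrableOn f (Ioi 0) := by
    refine integrableOn_Ioi_of_intervalIntegral_norm_bounded (1 + A) 0
      (fun n => (hfcont.integrableOn_Icc).mono_set Ioc_subset_Icc_self) hT₁
      (Eventually.of_forall fun n => ?_)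
    rw [keynorm _ (hR₁ n).2.1]
    have := key _ (hR₁ n).2.1
    linarith [(hR₁ n).2.2]
  refine ⟨hInt, ?_⟩
  refine le_of_forall_pos_le_add fun ε hε => ?_
  obtain ⟨R₂, hR₂⟩ := seq ε hε
  have hT₂ : Tendsto R₂ atTop atTop :=
    tendsto_atTop_mono (fun n => (hR₂ n).1) tendsto_natCast_atTop_atTop
  have conv := intervalIntegral_tendsto_integral_Ioi 0 hInt hT₂
  refine le_of_tendsto conv (Eventually.of_forall fun n => ?_)
  have := key _ (hR₂ n).2.1
  linarith [(hR₂ n).2.2]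

/-- Estimate on the cubic convection term: for `K ξ = exp (ξ²/(4ν))`, so
`K' ξ = (ξ/(2ν)) K ξ`, there is `C > 0` depending only on `ν` with
`|∫ u³ K'| ≤ C ‖u'‖_{L²(K)} ‖u‖_{L²(K)} ‖u‖_{L^∞}`. -/
theorem stmt10 (ν : ℝ) (hν : 0 < ν)
    (K : ℝ → ℝ) (hK : ∀ ξ, K ξ = Real.exp (ξ ^ 2 / (4 * ν))) :
    ∃ C > (0 : ℝ), ∀ (u : ℝ → ℝ) (m : ℝ), Differentiable ℝ u →
      Integrable (fun ξ => u ξ ^ 2 * K ξ) →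
      Integrable (fun ξ => (deriv u ξ) ^ 2 * K ξ) →
      (∀ ξ, |u ξ| ≤ m) →
      |∫ ξ, u ξ ^ 3 * ((ξ / (2 * ν)) * K ξ)|
        ≤ C * Real.sqrt (∫ ξ, (deriv u ξ) ^ 2 * K ξ)
            * Real.sqrt (∫ ξ, u ξ ^ 2 * K ξ) * m := by
  classical
  refine ⟨4, by norm_num, ?_⟩
  intro u m hu h2 h2' hm
  have hKpos : ∀ ξ, 0 < K ξ := fun ξ => by rw [hK]; exact Real.exp_pos _
  have hKeq : K = fun ξ => Real.exp (ξ ^ 2 / (4 * ν)) := funext hK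
  have hKcont : Continuous K := by
    rw [hKeq]; exact Real.continuous_exp.comp ((continuous_pow 2).div_const _)
  have hucont : Continuous u := hu.continuous
  have hm0 : 0 ≤ m := le_trans (abs_nonneg _) (hm 0)
  set S1 : ℝ := Real.sqrt (∫ ξ, (deriv u ξ) ^ 2 * K ξ) with hS1
  set S2 : ℝ := Real.sqrt (∫ ξ, u ξ ^ 2 * K ξ) with hS2
  have hS1nn : 0 ≤ S1 := Real.sqrt_nonneg _
  have hS2nn : 0 ≤ S2 := Real.sqrt_nonneg _
  set w : ℝ → ℝ := fun ξ => 2 * u ξ * deriv u ξ * K ξ with hw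
  -- Cauchy-Schwarz bound on ∫ |w|
  have hsqrtK : Continuous fun ξ => Real.sqrt (K ξ) := Real.continuous_sqrt.comp hKcont
  have hdm : AEStronglyMeasurable (fun ξ => deriv u ξ * Real.sqrt (K ξ)) volume :=
    ((measurable_deriv u).mul hsqrtK.measurable).aestronglyMeasurable
  have hsm : AEStronglyMeasurable (fun ξ => u ξ * Real.sqrt (K ξ)) volume :=
    (hucont.mul hsqrtK).aestronglyMeasurable
  have e1 : ∫ x, (deriv u x * Real.sqrt (K x)) ^ 2 = ∫ x, (deriv u x) ^ 2 * K x :=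
    integral_congr_ae (ae_of_all _ fun x => by simp only [mul_pow, Real.sq_sqrt (hKpos x).le])
  have e2 : ∫ x, (u x * Real.sqrt (K x)) ^ 2 = ∫ x, u x ^ 2 * K x :=
    integral_congr_ae (ae_of_all _ fun x => by simp only [mul_pow, Real.sq_sqrt (hKpos x).le])
  have hd2 : Integrable (fun x => (deriv u x * Real.sqrt (K x)) ^ 2) :=
    h2'.congr (ae_of_all _ fun x => by simp only [mul_pow, Real.sq_sqrt (hKpos x).le])
  have hs2 : Integrable (fun x => (u x * Real.sqrt (K x)) ^ 2) :=
    h2.congr (ae_of_all _ fun x => by simp only [mul_pow, Real.sq_sqrt (hKpos x).le])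
  have hcs := cs_aux hdm hsm hd2 hs2
  rw [e1, e2] at hcs
  have hA : ∫ ξ, |w ξ| ≤ 2 * (S1 * S2) := by
    have epw : ∀ ξ, |w ξ| =
        2 * (|deriv u ξ * Real.sqrt (K ξ)| * |u ξ * Real.sqrt (K ξ)|) := by
      intro ξ
      have h1 : |w ξ| = (2 * |u ξ| * |deriv u ξ|) * K ξ := by
        simp [hw, abs_mul, abs_of_pos (hKpos ξ)]
        try ring
      have h2 : |deriv u ξ * Real.sqrt (K ξ)| * |u ξ * Real.sqrt (K ξ)|
          = |deriv u ξ| * |u ξ| * K ξ := by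
        rw [abs_mul, abs_mul, abs_of_nonneg (Real.sqrt_nonneg _)]
        calc |deriv u ξ| * Real.sqrt (K ξ) * (|u ξ| * Real.sqrt (K ξ))
            = |deriv u ξ| * |u ξ| * (Real.sqrt (K ξ) * Real.sqrt (K ξ)) := by ring
          _ = |deriv u ξ| * |u ξ| * K ξ := by rw [Real.mul_self_sqrt (hKpos ξ).le]
      rw [h1, h2]; ring
    calc ∫ ξ, |w ξ|
        = ∫ ξ, 2 * (|deriv u ξ * Real.sqrt (K ξ)| * |u ξ * Real.sqrt (K ξ)|) :=
          integral_congr_ae (ae_of_all _ epw)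
      _ = 2 * ∫ ξ, |deriv u ξ * Real.sqrt (K ξ)| * |u ξ * Real.sqrt (K ξ)| :=
          integral_const_mul _ _
      _ ≤ 2 * (S1 * S2) := by
          rw [hS1, hS2]
          exact mul_le_mul_of_nonneg_left hcs (by norm_num)
  -- positive side
  obtain ⟨P1, P2⟩ := half_aux ν hν K hK u hu h2 h2'
  -- negative side via reflection
  set v : ℝ → ℝ := fun x => u (-x) with hv
  have hv' : Differentiable ℝ v := hu.comp differentiable_neg
  have hvd : ∀ x, deriv v x = deriv u (-x) * (-1) := by
    intro x
    have hcomp : HasDerivAt v (deriv u (-x) * (-1)) x :=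
      HasDerivAt.comp x (hu (-x)).hasDerivAt (hasDerivAt_neg x)
    exact hcomp.deriv
  have hKneg : ∀ ξ : ℝ, K (-ξ) = K ξ := fun ξ => by rw [hK, hK, neg_sq]
  have h2v : Integrable (fun ξ => v ξ ^ 2 * K ξ) := by
    have := h2.comp_neg
    exact this.congr (ae_of_all _ fun ξ => by simp [hv, hKneg ξ])
  have h2'v : Integrable (fun ξ => (deriv v ξ) ^ 2 * K ξ) := by
    have := h2'.comp_neg
    refine this.congr (ae_of_all _ fun ξ => ?_)
    show deriv u (-ξ) ^ 2 * K (-ξ) = deriv v ξ ^ 2 * K ξ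
    rw [hvd ξ, hKneg ξ]; ring
  obtain ⟨Q1, Q2⟩ := half_aux ν hν K hK v hv' h2v h2'v
  have hQw : ∫ ξ, |2 * v ξ * deriv v ξ * K ξ| = ∫ ξ, |w ξ| := by
    have e : ∀ ξ : ℝ, |2 * v ξ * deriv v ξ * K ξ| = |w (-ξ)| := by
      intro ξ
      rw [hw]
      rw [hvd ξ]; simp only [hv]
      rw [← hKneg ξ]
      rw [show 2 * u (-ξ) * (deriv u (-ξ) * (-1)) * K (-ξ)
        = -(2 * u (-ξ) * deriv u (-ξ) * K (-ξ)) from by ring, abs_neg]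
    calc ∫ ξ, |2 * v ξ * deriv v ξ * K ξ| = ∫ ξ, |w (-ξ)| :=
          integral_congr_ae (ae_of_all _ e)
      _ = ∫ ξ, |w ξ| := integral_neg_eq_self (fun ξ => |w ξ|) volume
  -- the even majorant G
  set G : ℝ → ℝ := fun ξ => u ξ ^ 2 * (|ξ| / (2 * ν)) * K ξ with hG
  have hGIoi : IntegrableOn G (Set.Ioi 0) := by
    refine P1.congr_fun (fun x hx => ?_) measurableSet_Ioi
    simp only [hG]
    rw [abs_of_pos hx]
  have hEqneg : ∀ x ∈ Set.Ioi (0:ℝ), v x ^ 2 * (x / (2 * ν)) * K x = G (-x) := by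
    intro x hx
    simp only [hG, hv, abs_neg, hKneg x]
    rw [abs_of_pos hx]
  have hGnegIoi : IntegrableOn (fun x => G (-x)) (Set.Ioi 0) :=
    Q1.congr_fun hEqneg measurableSet_Ioi
  have hGIic : IntegrableOn G (Set.Iic 0) := by
    have hGnegIci : IntegrableOn (fun x => G (-x)) (Set.Ici 0) :=
      (integrableOn_Ici_iff_integrableOn_Ioi enorm_ne_top).2 hGnegIoi
    have A : MeasurableEmbedding (fun x : ℝ => -x) :=
      (Homeomorph.neg ℝ).isClosedEmbedding.measurableEmbedding
    rw [IntegrableOn, ← Measure.map_neg_eq_self (volume : Measure ℝ),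
      Measure.restrict_map A.measurable measurableSet_Iic, A.integrable_map_iff]
    have hpre : (fun x : ℝ => -x) ⁻¹' (Set.Iic 0) = Set.Ici 0 := by
      ext x; simp
    rw [hpre]
    exact hGnegIci
  have hGint : Integrable G := by
    rw [← integrableOn_univ, ← Set.Iic_union_Ioi (a := (0:ℝ))]
    exact integrableOn_union.2 ⟨hGIic, hGIoi⟩
  -- bounds on pieces
  have hIoi_le : ∫ ξ in Set.Ioi 0, G ξ ≤ 2 * (S1 * S2) := by
    have : ∫ ξ in Set.Ioi 0, G ξ = ∫ ξ in Set.Ioi 0, u ξ ^ 2 * (ξ / (2 * ν)) * K ξ := by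
      refine setIntegral_congr_fun measurableSet_Ioi fun x hx => ?_
      simp only [hG]
      rw [abs_of_pos hx]
    rw [this]
    exact P2.trans hA
  have hIic_le : ∫ ξ in Set.Iic 0, G ξ ≤ 2 * (S1 * S2) := by
    have eneg : ∫ ξ in Set.Iic 0, G ξ = ∫ x in Set.Ioi 0, G (-x) := by
      have := integral_comp_neg_Ioi (0:ℝ) G
      rw [neg_zero] at this
      exact this.symm
    rw [eneg, ← setIntegral_congr_fun measurableSet_Ioi hEqneg]
    refine Q2.trans ?_
    rw [hQw]
    exact hA
  have hGtot : ∫ ξ, G ξ ≤ 4 * (S1 * S2) := by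
    rw [← integral_add_compl measurableSet_Iic hGint, Set.compl_Iic]
    linarith
  -- final estimate
  have hptwise : ∀ ξ, |u ξ ^ 3 * ((ξ / (2 * ν)) * K ξ)| ≤ m * G ξ := by
    intro ξ
    have habs : |u ξ ^ 3 * ((ξ / (2 * ν)) * K ξ)|
        = |u ξ| ^ 3 * ((|ξ| / (2 * ν)) * K ξ) := by
      rw [abs_mul, abs_mul, abs_pow, abs_div,
        abs_of_pos (by positivity : (0:ℝ) < 2 * ν), abs_of_pos (hKpos ξ)]
    have hcube : |u ξ| ^ 3 ≤ m * u ξ ^ 2 := by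
      calc |u ξ| ^ 3 = |u ξ| * u ξ ^ 2 := by rw [← sq_abs]; ring
        _ ≤ m * u ξ ^ 2 := mul_le_mul_of_nonneg_right (hm ξ) (sq_nonneg _)
    have hnn : 0 ≤ (|ξ| / (2 * ν)) * K ξ :=
      mul_nonneg (div_nonneg (abs_nonneg _) (by positivity)) (hKpos ξ).le
    calc |u ξ ^ 3 * ((ξ / (2 * ν)) * K ξ)|
        = |u ξ| ^ 3 * ((|ξ| / (2 * ν)) * K ξ) := habs
      _ ≤ (m * u ξ ^ 2) * ((|ξ| / (2 * ν)) * K ξ) :=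
          mul_le_mul_of_nonneg_right hcube hnn
      _ = m * G ξ := by simp only [hG]; ring
  calc |∫ ξ, u ξ ^ 3 * ((ξ / (2 * ν)) * K ξ)|
      ≤ ∫ ξ, |u ξ ^ 3 * ((ξ / (2 * ν)) * K ξ)| := by
        rw [← Real.norm_eq_abs]
        refine (norm_integral_le_integral_norm _).trans_eq ?_
        simp only [Real.norm_eq_abs]
    _ ≤ ∫ ξ, m * G ξ :=
        integral_mono_of_nonneg (ae_of_all _ fun ξ => abs_nonneg _)
          (hGint.const_mul m) (ae_of_all _ hptwise)
    _ = m * ∫ ξ, G ξ := integral_const_mul _ _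
    _ ≤ m * (4 * (S1 * S2)) := mul_le_mul_of_nonneg_left hGtot hm0
    _ = 4 * S1 * S2 * m := by ring
end
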